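/- Let Φ = Ω or Φ = Γ, let X be an infinite Hausdorff topological space, and assume that C*_p(X) is countably dense in USC*_p(X), i.e., for every f ∈ USC*_p(X) there is a countable set G ⊆ C*_p(X) with f ∈ closure(G). Then the following are equivalent, where 0̄ denotes the constant zero function on X: (a) USC*_p(X) satisfies the selection principle S₁(Φ̃↑, 𝒟); (b) USC*_p(X) is separable and X is an S₁(Φ,Ω)-space; (c) USC*_p(X) is separable and satisfies S₁(Φ_0̄,Ω_0̄); (d) USC*_p(X) is separable and satisfies S₁(Φ̃↑,Ω_0̄). -/

import Mathlib

open Set Filter Topology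

namespace Selectors

variable {X : Type*}

/-- Kinds of covers / of pointwise properties: `o` (ordinary covers / 𝒪),
`omega` (ω-covers / Ω), `gamma` (γ-covers / Γ). -/
inductive CoverKind : Type
  | o | omega | gamma

/-- `f` is a bounded upper semicontinuous real function on `X`. -/
def IsUSCb [TopologicalSpace X] (f : X → ℝ) : Prop :=
  (∀ a : ℝ, IsOpen {x | f x < a}) ∧ ∃ M : ℝ, ∀ x, |f x| ≤ M

/-- `USC*_p(X)`: the set of bounded upper semicontinuous real functions on `X`,
regarded as a subset of `X → ℝ` with the product (pointwise convergence) topology. -/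
def USCb (X : Type*) [TopologicalSpace X] : Set (X → ℝ) := {f | IsUSCb f}

/-- `C*_p(X)`: the set of bounded continuous real functions on `X`. -/
def Cb (X : Type*) [TopologicalSpace X] : Set (X → ℝ) :=
  {f | Continuous f ∧ ∃ M : ℝ, ∀ x, |f x| ≤ M}

/-- `𝒰` is a cover of `X`. -/
def IsCover (𝒰 : Set (Set X)) : Prop := ∀ x : X, ∃ U ∈ 𝒰, x ∈ U

/-- The (not necessarily open) cover condition of the given kind:
an `o`-cover is a cover; an ω-cover is a cover not containing `X` such that every
finite subset of `X` is contained in a member; a γ-cover is an infinite cover such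
that each point belongs to all but finitely many members. -/
def kindSets (k : CoverKind) (𝒰 : Set (Set X)) : Prop :=
  match k with
  | .o => IsCover 𝒰
  | .omega => IsCover 𝒰 ∧ Set.univ ∉ 𝒰 ∧ ∀ F : Set X, F.Finite → ∃ U ∈ 𝒰, F ⊆ U
  | .gamma => IsCover 𝒰 ∧ 𝒰.Infinite ∧ ∀ x : X, {U ∈ 𝒰 | x ∉ U}.Finite

/-- The family `𝒪(X)`, `Ω(X)` or `Γ(X)` of open covers/ω-covers/γ-covers of `X`. -/
def OpenKindCovers (X : Type*) [TopologicalSpace X] (k : CoverKind) : Set (Set (Set X)) :=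
  {𝒰 | (∀ U ∈ 𝒰, IsOpen U) ∧ kindSets k 𝒰}

/-- The selection principle `S₁(A, B)`. -/
def S1 {α : Type*} (A B : Set (Set α)) : Prop :=
  ∀ u : ℕ → Set α, (∀ n, u n ∈ A) →
    ∃ sel : ℕ → α, (∀ n, sel n ∈ u n) ∧ Set.range sel ∈ B

/-- The selection principle `S_fin(A, B)`. -/
def Sfin {α : Type*} (A B : Set (Set α)) : Prop :=
  ∀ u : ℕ → Set α, (∀ n, u n ∈ A) →
    ∃ V : ℕ → Set α, (∀ n, V n ⊆ u n ∧ (V n).Finite) ∧ (⋃ n, V n) ∈ B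

/-- Property `(𝒪_h)` of a family `F` of real functions. -/
def PropO (h : X → ℝ) (F : Set (X → ℝ)) : Prop :=
  ∀ x : X, h x ∈ closure ((fun f : X → ℝ => f x) '' F)

/-- Property `(Ω_h)`: `h ∉ F` and `h` belongs to the closure of `F` in `ℝ^X`. -/
def PropOmega (h : X → ℝ) (F : Set (X → ℝ)) : Prop :=
  h ∉ F ∧ h ∈ closure F

/-- Property `(Γ_h)`. -/
def PropGamma (h : X → ℝ) (F : Set (X → ℝ)) : Prop :=
  F.Infinite ∧ ∀ ε : ℝ, 0 < ε → ∀ x : X, {f ∈ F | ε ≤ |f x - h x|}.Finite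

/-- Property `(Φ_h)` for `Φ = 𝒪, Ω, Γ`. -/
def kindProp (k : CoverKind) (h : X → ℝ) (F : Set (X → ℝ)) : Prop :=
  match k with
  | .o => PropO h F
  | .omega => PropOmega h F
  | .gamma => PropGamma h F

/-- The family `Φ_h(H) = {F ⊆ H : F has (Φ_h) and ∀ f ∈ F, f ≥ h ∧ f - h ∈ H}`. -/
def PhiH (k : CoverKind) (h : X → ℝ) (H : Set (X → ℝ)) : Set (Set (X → ℝ)) :=
  {F | F ⊆ H ∧ kindProp k h F ∧ ∀ f ∈ F, h ≤ f ∧ f - h ∈ H}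

/-- `F ⊆ H` is sequentially dense in `H` (with respect to pointwise convergence). -/
def SeqDenseIn (F H : Set (X → ℝ)) : Prop :=
  F ⊆ H ∧ ∀ f ∈ H, ∃ u : ℕ → (X → ℝ), (∀ n, u n ∈ F) ∧
    Filter.Tendsto u Filter.atTop (nhds f)

/-- `F ⊆ H` is dense in `H`. -/
def DenseIn (F H : Set (X → ℝ)) : Prop :=
  F ⊆ H ∧ H ⊆ closure F

/-- `F` is pointwise dense: `{f x : f ∈ F}` is dense in `ℝ` for every `x`. -/
def PointwiseDense (F : Set (X → ℝ)) : Prop :=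
  ∀ x : X, Dense {y : ℝ | ∃ f ∈ F, f x = y}

/-- `F ⊆ H` is upper sequentially dense in `H`. -/
def UpperSeqDenseIn (F H : Set (X → ℝ)) : Prop :=
  F ⊆ H ∧ ∀ f ∈ H, ∃ u : ℕ → (X → ℝ),
    (∀ n, u n ∈ F ∧ f ≤ u n ∧ u n - f ∈ H) ∧
    Filter.Tendsto u Filter.atTop (nhds f)

/-- `F ⊆ H` is upper dense in `H`: for every `f ∈ H` the set
`{h ∈ F : h ≥ f ∧ h - f ∈ H}` is dense in `{h ∈ H : h ≥ f}`. -/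
def UpperDenseIn (F H : Set (X → ℝ)) : Prop :=
  F ⊆ H ∧ ∀ f ∈ H, {g | g ∈ H ∧ f ≤ g} ⊆ closure {g | g ∈ F ∧ f ≤ g ∧ g - f ∈ H}

/-- `𝒮(H)`: the family of sequentially dense subsets of `H`. -/
def Sfam (H : Set (X → ℝ)) : Set (Set (X → ℝ)) := {F | SeqDenseIn F H}

/-- `𝒟(H)`: the family of dense subsets of `H`. -/
def Dfam (H : Set (X → ℝ)) : Set (Set (X → ℝ)) := {F | DenseIn F H}

/-- `𝒫(H)`: the family of pointwise dense subsets of `H`. -/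
def Pfam (H : Set (X → ℝ)) : Set (Set (X → ℝ)) := {F | F ⊆ H ∧ PointwiseDense F}

/-- `Φ̃↑(H)`: for `Φ = Γ` the upper sequentially dense subsets, for `Φ = Ω`
the upper dense subsets, for `Φ = 𝒪` the pointwise dense subsets of `H`. -/
def upTilde (k : CoverKind) (H : Set (X → ℝ)) : Set (Set (X → ℝ)) :=
  match k with
  | .o => Pfam H
  | .omega => {F | UpperDenseIn F H}
  | .gamma => {F | UpperSeqDenseIn F H}

/-- `H` is separable: it has a countable dense subset. -/
def SeparableSet (H : Set (X → ℝ)) : Prop := ∃ D, D.Countable ∧ DenseIn D H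

/-- `H` is sequentially separable: it has a countable sequentially dense subset. -/
def SeqSeparableSet (H : Set (X → ℝ)) : Prop := ∃ D, D.Countable ∧ SeqDenseIn D H

/-- Property `(ε)`: every open ω-cover contains a countable ω-subcover. -/
def PropEps (X : Type*) [TopologicalSpace X] : Prop :=
  ∀ 𝒰 : Set (Set X), 𝒰 ∈ OpenKindCovers X CoverKind.omega →
    ∃ 𝒱 ⊆ 𝒰, 𝒱.Countable ∧ 𝒱 ∈ OpenKindCovers X CoverKind.omega

/-- `S` is an `F_σ` set with respect to the topology `t`. -/
def IsFsigmaIn (t : TopologicalSpace X) (S : Set X) : Prop :=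
  ∃ C : ℕ → Set X, (∀ n, IsClosed[t] (C n)) ∧ S = ⋃ n, C n

/-- `S` is locally closed with respect to `t`: an intersection of a `t`-open
and a `t`-closed set. -/
def IsLocallyClosedIn (t : TopologicalSpace X) (S : Set X) : Prop :=
  ∃ U F : Set X, IsOpen[t] U ∧ IsClosed[t] F ∧ S = U ∩ F

/-- `S` is a cozero set with respect to `t`. -/
def IsCozeroIn (t : TopologicalSpace X) (S : Set X) : Prop :=
  ∃ f : X → ℝ, @Continuous X ℝ t inferInstance f ∧ S = {x | f x ≠ 0}

/-- The `OB`-property of `⟨X, t⟩`: there is a separable metrizable topology `t'`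
on `X` weaker than `t` such that every locally closed subset of `⟨X, t⟩` is an
`F_σ`-set in `t'`. -/
def OBProperty (X : Type*) [t : TopologicalSpace X] : Prop :=
  ∃ t' : TopologicalSpace X,
    (∀ s : Set X, IsOpen[t'] s → IsOpen[t] s) ∧
    @TopologicalSpace.MetrizableSpace X t' ∧
    @TopologicalSpace.SeparableSpace X t' ∧
    ∀ S : Set X, IsLocallyClosedIn t S → IsFsigmaIn t' S

/-- The `V`-property of `⟨X, t⟩`: there is a separable metrizable topology `t'`
on `X` weaker than `t` such that every cozero subset of `⟨X, t⟩` is an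
`F_σ`-set in `t'`. -/
def VProperty (X : Type*) [t : TopologicalSpace X] : Prop :=
  ∃ t' : TopologicalSpace X,
    (∀ s : Set X, IsOpen[t'] s → IsOpen[t] s) ∧
    @TopologicalSpace.MetrizableSpace X t' ∧
    @TopologicalSpace.SeparableSpace X t' ∧
    ∀ S : Set X, IsCozeroIn t S → IsFsigmaIn t' S

/-- `iw(X) = ℵ₀`: `X` can be mapped by a one-to-one continuous map onto a
Tychonoff space of countable weight. -/
def IWCountable (X : Type*) [TopologicalSpace X] : Prop :=
  ∃ (Y : Type) (tY : TopologicalSpace Y) (f : X → Y),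
    @Continuous X Y _ tY f ∧ Function.Bijective f ∧
    @T35Space Y tY ∧ @SecondCountableTopology Y tY

/-- `Φ^sh(X)`: the family of open shrinkable φ-covers of `X`. -/
def ShFam (X : Type*) [TopologicalSpace X] (k : CoverKind) : Set (Set (Set X)) :=
  {𝒰 | 𝒰 ∈ OpenKindCovers X k ∧
    ∃ 𝒲 ∈ OpenKindCovers X k, ∀ W ∈ 𝒲, ∃ U ∈ 𝒰, closure W ⊆ U}

/-- A zero set. -/
def IsZeroSet [TopologicalSpace X] (S : Set X) : Prop :=
  ∃ f : X → ℝ, Continuous f ∧ S = {x | f x = 0}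

/-- A cozero set. -/
def IsCozeroSet [TopologicalSpace X] (S : Set X) : Prop :=
  ∃ f : X → ℝ, Continuous f ∧ S = {x | f x ≠ 0}

/-- `Φ^fsh_cz(X)`: the family of functionally shrinkable φ-covers of `X`
consisting of cozero sets. -/
def FshCzFam (X : Type*) [TopologicalSpace X] (k : CoverKind) : Set (Set (Set X)) :=
  {𝒰 | (∀ U ∈ 𝒰, IsCozeroSet U) ∧ kindSets k 𝒰 ∧
    ∃ 𝒲 : Set (Set X), (∀ W ∈ 𝒲, IsZeroSet W) ∧ kindSets k 𝒲 ∧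
      ∀ W ∈ 𝒲, ∃ U ∈ 𝒰, closure W ⊆ U}

/-- The function `f_{U,g}`: equal to `0` on `U` and to `1 + sup |g|` off `U`. -/
noncomputable def fU (U : Set X) (g : X → ℝ) : X → ℝ :=
  Uᶜ.indicator fun _ => 1 + ⨆ y, |g y|

/-- The family `S(𝒰) = {f_{U,g} + g : U ∈ 𝒰, g ∈ USC*_p(X)}`. -/
def SU [TopologicalSpace X] (𝒰 : Set (Set X)) : Set (X → ℝ) :=
  {f | ∃ U ∈ 𝒰, ∃ g ∈ USCb X, f = fU U g + g}

/-- The Sorgenfrey topology on `ℝ`, generated by the half-open intervals `[a, b)`. -/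
def sorgenfreyTop : TopologicalSpace ℝ :=
  TopologicalSpace.generateFrom {s | ∃ a b : ℝ, s = Set.Ico a b}

/-- The Sorgenfrey plane topology on `ℝ × ℝ`. -/
def sorgenfreyPlaneTop : TopologicalSpace (ℝ × ℝ) :=
  @instTopologicalSpaceProd ℝ ℝ sorgenfreyTop sorgenfreyTop



/-! ### Auxiliary lemmas -/

section Aux
set_option linter.unusedSectionVars false
set_option linter.unusedVariables false
variable {X : Type*}

lemma closure_pi_iff {S : Set (X → ℝ)} {h : X → ℝ} :
    h ∈ closure S ↔ ∀ (T : Finset X) (ε : ℝ), 0 < ε →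
      ∃ f ∈ S, ∀ x ∈ T, |f x - h x| < ε := by
  constructor
  · intro hc T ε hε
    have hopen : IsOpen {g : X → ℝ | ∀ x ∈ T, |g x - h x| < ε} := by
      have : {g : X → ℝ | ∀ x ∈ T, |g x - h x| < ε} =
          ⋂ x ∈ T, (fun g : X → ℝ => g x) ⁻¹' (Metric.ball (h x) ε) := by
        ext g; simp [Real.dist_eq, Metric.mem_ball]
      rw [this]
      exact isOpen_biInter_finset fun x _ =>
        (continuous_apply x).isOpen_preimage _ Metric.isOpen_ball
    have hh : h ∈ {g : X → ℝ | ∀ x ∈ T, |g x - h x| < ε} := by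
      intro x _; simpa using hε
    rcases _root_.mem_closure_iff.1 hc _ hopen hh with ⟨f, hf1, hf2⟩
    exact ⟨f, hf2, hf1⟩
  · intro H
    rw [mem_closure_iff_nhds]
    intro s hs
    rw [nhds_pi, Filter.mem_pi] at hs
    obtain ⟨I, hIfin, t, ht, hsub⟩ := hs
    classical
    choose ε hε hball using fun x => Metric.mem_nhds_iff.1 (ht x)
    set T := hIfin.toFinset
    by_cases hT : T.Nonempty
    · set ε₀ := T.inf' hT ε with hε₀
      have hε₀pos : 0 < ε₀ := by
        rw [hε₀, Finset.lt_inf'_iff]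
        intro x _; exact hε x
      obtain ⟨f, hfS, hf⟩ := H T ε₀ hε₀pos
      refine ⟨f, hsub ?_, hfS⟩
      intro x hx
      have hxT : x ∈ T := hIfin.mem_toFinset.2 hx
      apply hball x
      rw [Metric.mem_ball, Real.dist_eq]
      exact lt_of_lt_of_le (hf x hxT) (Finset.inf'_le _ hxT)
    · obtain ⟨f, hfS, _⟩ := H ∅ 1 one_pos
      refine ⟨f, hsub ?_, hfS⟩
      intro x hx
      exact absurd (hIfin.mem_toFinset.2 hx) (fun hh => hT ⟨x, hh⟩)

variable [TopologicalSpace X]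

lemma zero_mem_USCb : (0 : X → ℝ) ∈ USCb X := by
  refine ⟨fun a => ?_, 0, fun x => by simp⟩
  by_cases h : (0:ℝ) < a
  · convert isOpen_univ using 1; ext x; simpa using h
  · convert isOpen_empty using 1; ext x; simpa using h

lemma add_mem_USCb {f g : X → ℝ} (hf : f ∈ USCb X) (hg : g ∈ USCb X) :
    f + g ∈ USCb X := by
  obtain ⟨hfo, Mf, hMf⟩ := hf
  obtain ⟨hgo, Mg, hMg⟩ := hg
  refine ⟨fun a => ?_, Mf + Mg, fun x => by
    calc |f x + g x| ≤ |f x| + |g x| := abs_add_le _ _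
      _ ≤ Mf + Mg := add_le_add (hMf x) (hMg x)⟩
  have : {x | (f + g) x < a} = ⋃ q : ℚ, ({x | f x < (q:ℝ)} ∩ {x | g x < a - q}) := by
    ext x
    simp only [Pi.add_apply, mem_setOf_eq, mem_iUnion, mem_inter_iff]
    constructor
    · intro hx
      obtain ⟨q, hq1, hq2⟩ := exists_rat_btwn (show f x < a - g x by linarith)
      exact ⟨q, hq1, by linarith⟩
    · rintro ⟨q, h1, h2⟩; linarith
  rw [this]
  exact isOpen_iUnion fun q => (hfo _).inter (hgo _)

/-- A nonnegative "spike" supported on a finite set is bounded USC (needs T1). -/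
lemma spike_mem_USCb [T1Space X] (T : Finset X) (v : X → ℝ) (hv : ∀ x, 0 ≤ v x) :
    (↑T : Set X).indicator v ∈ USCb X := by
  classical
  constructor
  · intro a
    by_cases ha : 0 < a
    · have : {x | (↑T : Set X).indicator v x < a} = (↑(T.filter fun x => a ≤ v x) : Set X)ᶜ := by
        ext x
        by_cases hx : x ∈ T <;> simp [Set.indicator_apply, hx, ha, not_le]
      rw [this]
      exact (Set.Finite.isClosed (T.filter _).finite_toSet).isOpen_compl
    · convert isOpen_empty using 1
      ext x
      simp only [mem_setOf_eq, mem_empty_iff_false, iff_false, not_lt]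
      refine le_trans (le_of_not_gt ha) ?_
      by_cases hx : (x : X) ∈ (↑T : Set X) <;> simp [Set.indicator_apply, hx, hv x]
  · refine ⟨∑ t ∈ T, v t, fun x => ?_⟩
    by_cases hx : (x : X) ∈ (↑T : Set X)
    · rw [Set.indicator_of_mem hx, abs_of_nonneg (hv x)]
      exact Finset.single_le_sum (fun t _ => hv t) (by simpa using hx)
    · rw [Set.indicator_of_notMem hx, abs_zero]
      exact Finset.sum_nonneg fun t _ => hv t

lemma spike_nonneg (T : Finset X) (v : X → ℝ) (hv : ∀ x, 0 ≤ v x) (x : X) :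
    0 ≤ (↑T : Set X).indicator v x := Set.indicator_nonneg (fun y _ => hv y) x

/-- Indicator of the complement of an open set with nonneg constant is USC. -/
lemma indicator_compl_mem_USCb {U : Set X} (hU : IsOpen U) {c : ℝ} (hc : 0 ≤ c) :
    Uᶜ.indicator (fun _ => c) ∈ USCb X := by
  constructor
  · intro a
    rcases le_or_gt a 0 with ha | ha
    · convert isOpen_empty using 1
      ext x
      simp only [mem_setOf_eq, mem_empty_iff_false, iff_false, not_lt]
      refine le_trans ha ?_
      by_cases hx : x ∈ Uᶜ <;> simp [Set.indicator_apply, hx, hc]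
    · rcases lt_or_ge c a with hca | hca
      · convert isOpen_univ using 1
        ext x
        simp only [mem_setOf_eq, mem_univ, iff_true]
        by_cases hx : x ∈ Uᶜ <;> simp [Set.indicator_apply, hx, hca, ha]
      · convert hU using 1
        ext x
        by_cases hx : x ∈ U <;> simp [Set.indicator_apply, hx, ha]
        · exact hca
  · refine ⟨c, fun x => ?_⟩
    by_cases hx : x ∈ Uᶜ <;> simp [Set.indicator_apply, hx, hc, abs_of_nonneg hc]

lemma csup_abs_nonneg (g : X → ℝ) : 0 ≤ ⨆ y, |g y| := Real.iSup_nonneg fun y => abs_nonneg _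

lemma fU_mem_USCb {U : Set X} (hU : IsOpen U) (g : X → ℝ) : fU U g ∈ USCb X :=
  indicator_compl_mem_USCb hU (by have := csup_abs_nonneg g; linarith)

lemma fU_nonneg (U : Set X) (g : X → ℝ) (x : X) : 0 ≤ fU U g x :=
  Set.indicator_nonneg (fun y _ => by have := csup_abs_nonneg g; linarith) x

lemma fU_of_mem {U : Set X} (g : X → ℝ) {x : X} (hx : x ∈ U) : fU U g x = 0 :=
  Set.indicator_of_notMem (by simpa using hx) _

lemma one_le_fU_add {U : Set X} {g : X → ℝ} {M : ℝ} (hM : ∀ y, |g y| ≤ M)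
    {x : X} (hx : x ∉ U) : 1 ≤ fU U g x + g x := by
  have h1 : fU U g x = 1 + ⨆ y, |g y| := Set.indicator_of_mem (by simpa using hx) _
  have h2 : |g x| ≤ ⨆ y, |g y| :=
    le_ciSup (f := fun y => |g y|) ⟨M, by rintro _ ⟨y, rfl⟩; exact hM y⟩ x
  have h3 : -g x ≤ |g x| := neg_le_abs _
  linarith

end Aux


section Impl
set_option linter.unusedSectionVars false
set_option linter.unusedVariables false
set_option maxHeartbeats 1000000
variable {X : Type*} [TopologicalSpace X]

lemma upTilde_subset {Φ : CoverKind} {S H : Set (X → ℝ)} (h : S ∈ upTilde Φ H) : S ⊆ H := by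
  cases Φ <;> exact h.1

lemma exists_ne_zero_of_upTilde [T1Space X] [Nonempty X] {Φ : CoverKind}
    (hΦ : Φ = CoverKind.omega ∨ Φ = CoverKind.gamma)
    {S : Set (X → ℝ)} (hS : S ∈ upTilde Φ (USCb X)) : ∃ g ∈ S, g ≠ 0 := by
  obtain ⟨x₀⟩ := ‹Nonempty X›
  set h₀ : X → ℝ := (↑({x₀} : Finset X) : Set X).indicator (fun _ => 1) with hh₀def
  have hh₀ : h₀ ∈ USCb X := spike_mem_USCb _ _ (fun _ => zero_le_one)
  have hx₀ : h₀ x₀ = 1 := Set.indicator_of_mem (by simp) _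
  rcases hΦ with rfl | rfl
  · have hcl : h₀ ∈ closure {g | g ∈ S ∧ h₀ ≤ g ∧ g - h₀ ∈ USCb X} :=
      hS.2 h₀ hh₀ ⟨hh₀, le_rfl⟩
    rcases closure_pi_iff.1 hcl {x₀} 1 one_pos with ⟨g, ⟨hgS, hge, _⟩, _⟩
    refine ⟨g, hgS, fun h0 => ?_⟩
    have h1 := hge x₀
    rw [h0, hx₀] at h1
    simp at h1
    linarith
  · obtain ⟨u, hu, _⟩ := hS.2 h₀ hh₀
    refine ⟨u 0, (hu 0).1, fun h0 => ?_⟩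
    have h1 := (hu 0).2.1 x₀
    rw [h0, hx₀] at h1
    simp at h1
    linarith

lemma USCb_mem_upTilde_self [T1Space X] {Φ : CoverKind}
    (hΦ : Φ = CoverKind.omega ∨ Φ = CoverKind.gamma) :
    USCb X ∈ upTilde Φ (USCb X) := by
  classical
  rcases hΦ with rfl | rfl
  · refine ⟨subset_rfl, fun f hf g hg => ?_⟩
    obtain ⟨hgH, hfg⟩ := hg
    rw [closure_pi_iff]
    intro T ε hε
    have hv : ∀ x, 0 ≤ g x - f x := fun x => sub_nonneg.2 (hfg x)
    set s : X → ℝ := (↑T : Set X).indicator (fun x => g x - f x) with hs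
    have hsH : s ∈ USCb X := spike_mem_USCb _ _ hv
    refine ⟨f + s, ⟨add_mem_USCb hf hsH, fun x => ?_, by simpa using hsH⟩, fun x hx => ?_⟩
    · simpa using spike_nonneg T _ hv x
    · have : s x = g x - f x := Set.indicator_of_mem (by simpa using hx) _
      simp only [Pi.add_apply, this]
      simpa using hε
  · exact ⟨subset_rfl, fun f hf => ⟨fun _ => f,
      fun n => ⟨hf, le_rfl, by simpa [sub_self] using (zero_mem_USCb : (0:X→ℝ) ∈ USCb X)⟩,
      tendsto_const_nhds⟩⟩

lemma aImpD [T1Space X] [Infinite X] {Φ : CoverKind}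
    (hΦ : Φ = CoverKind.omega ∨ Φ = CoverKind.gamma)
    (ha : S1 (upTilde Φ (USCb X)) (Dfam (USCb X))) :
    SeparableSet (USCb X) ∧ S1 (upTilde Φ (USCb X)) {F | PropOmega 0 F} := by
  constructor
  · obtain ⟨sel, _, hd⟩ := ha (fun _ => USCb X) (fun _ => USCb_mem_upTilde_self hΦ)
    exact ⟨Set.range sel, Set.countable_range _, hd⟩
  · intro S hSmem
    obtain ⟨g, hgmem, hgdense⟩ := ha S hSmem
    choose z hzS hzne using fun n => exists_ne_zero_of_upTilde hΦ (hSmem n)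
    classical
    set f : ℕ → X → ℝ := fun n => if g n = 0 then z n else g n with hf
    have hfS : ∀ n, f n ∈ S n := fun n => by
      by_cases h : g n = 0 <;> simp [hf, h, hzS n, hgmem n]
    have hfne : ∀ n, f n ≠ 0 := fun n => by
      by_cases h : g n = 0 <;> simp [hf, h, hzne n]
    refine ⟨f, hfS, ?_, ?_⟩
    · rintro ⟨n, hn⟩
      exact hfne n hn
    · rw [closure_pi_iff]
      intro T ε hε
      obtain ⟨x₀, hx₀⟩ : ∃ x : X, x ∉ T := by
        obtain ⟨x, hx⟩ := (T.finite_toSet.infinite_compl).nonempty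
        exact ⟨x, by simpa using hx⟩
      set h₀ : X → ℝ := (↑({x₀} : Finset X) : Set X).indicator (fun _ => ε/2) with hh₀def
      have hh₀H : h₀ ∈ USCb X := spike_mem_USCb _ _ (fun _ => by positivity)
      obtain ⟨w, hwrange, hwclose⟩ :=
        closure_pi_iff.1 (hgdense.2 hh₀H) (insert x₀ T) (ε/4) (by positivity)
      obtain ⟨n, rfl⟩ := hwrange
      have hgx₀ : |g n x₀ - ε/2| < ε/4 := by
        have h1 := hwclose x₀ (Finset.mem_insert_self _ _)
        have h2 : h₀ x₀ = ε/2 := Set.indicator_of_mem (by simp) _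
        rwa [h2] at h1
      have hgne : g n ≠ 0 := by
        intro h0
        rw [h0] at hgx₀
        simp [abs_of_nonneg, abs_sub_comm] at hgx₀
        rw [abs_of_nonneg (by linarith)] at hgx₀
        linarith
      refine ⟨f n, ⟨n, rfl⟩, fun x hx => ?_⟩
      have hxne : x ≠ x₀ := fun h => hx₀ (h ▸ hx)
      have h3 : h₀ x = 0 := Set.indicator_of_notMem (by simp [hxne]) _
      have h4 : |g n x - 0| < ε := by
        have := hwclose x (Finset.mem_insert_of_mem hx)
        rw [h3] at this
        linarith
      have h5 : f n = g n := by simp [hf, hgne]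
      rw [h5]
      exact h4

lemma SU_subset {𝒰 : Set (Set X)} (hop : ∀ U ∈ 𝒰, IsOpen U) : SU 𝒰 ⊆ USCb X := by
  rintro f ⟨U, hU, g, hg, rfl⟩
  exact add_mem_USCb (fU_mem_USCb (hop U hU) g) hg

lemma SU_upperSeqDense {𝒰 : Set (Set X)} (hop : ∀ U ∈ 𝒰, IsOpen U)
    (hcov : kindSets CoverKind.gamma 𝒰) :
    UpperSeqDenseIn (SU 𝒰) (USCb X) := by
  obtain ⟨hc, hinf, hfin⟩ := hcov
  refine ⟨SU_subset hop, fun h₀ hh₀ => ?_⟩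
  set emb := hinf.natEmbedding with hembdef
  set U : ℕ → Set X := fun j => (emb j : Set X) with hUdef
  refine ⟨fun j => fU (U j) h₀ + h₀, fun j =>
    ⟨⟨U j, (emb j).2, h₀, hh₀, rfl⟩, fun x => le_add_of_nonneg_left (fU_nonneg _ _ x),
      by rw [add_sub_cancel_right]; exact fU_mem_USCb (hop _ (emb j).2) h₀⟩, ?_⟩
  rw [tendsto_pi_nhds]
  intro x
  have hfin2 : {j : ℕ | x ∉ U j}.Finite := by
    have hinj : Function.Injective (fun j => (emb j : Set X)) :=
      fun a b hab => emb.injective (Subtype.coe_injective hab)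
    have h1 : {j : ℕ | x ∉ U j} ⊆ (fun j => (emb j : Set X)) ⁻¹' {V | V ∈ 𝒰 ∧ x ∉ V} :=
      fun j hj => ⟨(emb j).2, hj⟩
    exact Set.Finite.subset (Set.Finite.preimage hinj.injOn (hfin x)) h1
  have hev : ∀ᶠ j in Filter.atTop, x ∈ U j := by
    have h2 := hfin2.eventually_cofinite_notMem
    rw [Nat.cofinite_eq_atTop] at h2
    simpa using h2
  exact Filter.Tendsto.congr'
    (hev.mono fun j hj => by simp [fU_of_mem _ hj]) tendsto_const_nhds

lemma SU_upperDense [T1Space X] {𝒰 : Set (Set X)} (hop : ∀ U ∈ 𝒰, IsOpen U)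
    (hcov : kindSets CoverKind.omega 𝒰) :
    UpperDenseIn (SU 𝒰) (USCb X) := by
  obtain ⟨hc, huniv, hfs⟩ := hcov
  refine ⟨SU_subset hop, fun h₀ hh₀ g hg => ?_⟩
  obtain ⟨hgH, hle⟩ := hg
  rw [closure_pi_iff]
  intro T ε hε
  obtain ⟨U, hU𝒰, hTU⟩ := hfs ↑T T.finite_toSet
  classical
  have hv : ∀ x, 0 ≤ g x - h₀ x := fun x => sub_nonneg.2 (hle x)
  set s : X → ℝ := (↑T : Set X).indicator (fun x => g x - h₀ x) with hsdef
  have hsH : s ∈ USCb X := spike_mem_USCb T _ hv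
  set w : X → ℝ := h₀ + s with hwdef
  have hwH : w ∈ USCb X := add_mem_USCb hh₀ hsH
  refine ⟨fU U w + w, ⟨⟨U, hU𝒰, w, hwH, rfl⟩, fun x => ?_, ?_⟩, fun x hx => ?_⟩
  · have h1 := fU_nonneg U w x
    have h2 := spike_nonneg T _ hv x
    simp only [Pi.add_apply, hwdef]
    have h2' : 0 ≤ s x := h2
    linarith
  · have heq : (fU U w + w) - h₀ = fU U w + s := by
      funext x
      simp only [Pi.sub_apply, Pi.add_apply, hwdef]
      ring
    rw [heq]
    exact add_mem_USCb (fU_mem_USCb (hop U hU𝒰) w) hsH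
  · have hxU : x ∈ U := hTU (by simpa using hx)
    have h0 : fU U w x = 0 := fU_of_mem _ hxU
    have hs : s x = g x - h₀ x := Set.indicator_of_mem (by simpa using hx) _
    simp only [Pi.add_apply, hwdef, h0, hs]
    simpa [show fU U (h₀ + s) x = 0 from h0] using hε

lemma SU_select {Φ : CoverKind} {u u' : ℕ → Set (Set X)} (hsub : ∀ n, u' n ⊆ u n)
    (huniv : ∀ n, Set.univ ∉ u' n)
    (hSU : ∀ n, SU (u' n) ∈ upTilde Φ (USCb X))
    (hd : S1 (upTilde Φ (USCb X)) {F | PropOmega 0 F})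
    (hopen : ∀ n, ∀ U ∈ u n, IsOpen U) :
    ∃ sel : ℕ → Set X, (∀ n, sel n ∈ u n) ∧
      Set.range sel ∈ OpenKindCovers X CoverKind.omega := by
  obtain ⟨e, he, hprop⟩ := hd (fun n => SU (u' n)) hSU
  obtain ⟨hne, hcl⟩ := hprop
  choose U hU g hg heq using he
  have key : ∀ T : Finset X, ∃ n, ∀ x ∈ T, x ∈ U n := by
    intro T
    obtain ⟨w, hwr, hwc⟩ := closure_pi_iff.1 hcl T 1 one_pos
    obtain ⟨n, rfl⟩ := hwr
    refine ⟨n, fun x hx => ?_⟩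
    by_contra hxU
    obtain ⟨M, hM⟩ := (hg n).2
    have h1 := one_le_fU_add hM hxU
    have h2 := hwc x hx
    rw [heq n] at h2
    simp only [Pi.add_apply, Pi.zero_apply, sub_zero] at h2
    have h3 := le_abs_self (fU (U n) (g n) x + g n x)
    linarith
  refine ⟨U, fun n => hsub n (hU n), ?_, ?_, ?_, ?_⟩
  · rintro V ⟨n, rfl⟩
    exact hopen n _ (hsub n (hU n))
  · intro x
    obtain ⟨n, hn⟩ := key {x}
    exact ⟨U n, ⟨n, rfl⟩, hn x (by simp)⟩
  · rintro ⟨n, hn⟩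
    exact huniv n (hn ▸ hU n)
  · intro F hF
    obtain ⟨n, hn⟩ := key hF.toFinset
    exact ⟨U n, ⟨n, rfl⟩, fun x hx => hn x (hF.mem_toFinset.2 hx)⟩

lemma dImpB [T1Space X] {Φ : CoverKind}
    (hΦ : Φ = CoverKind.omega ∨ Φ = CoverKind.gamma)
    (hsep : SeparableSet (USCb X))
    (hd : S1 (upTilde Φ (USCb X)) {F | PropOmega 0 F}) :
    SeparableSet (USCb X) ∧
      S1 (OpenKindCovers X Φ) (OpenKindCovers X CoverKind.omega) := by
  refine ⟨hsep, ?_⟩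
  rcases hΦ with rfl | rfl
  · intro u hu
    exact SU_select (Φ := CoverKind.omega) (fun n => subset_rfl) (fun n => (hu n).2.2.1)
      (fun n => show UpperDenseIn (SU (u n)) (USCb X) from
        SU_upperDense (hu n).1 (hu n).2) hd (fun n U h => (hu n).1 U h)
  · intro u hu
    have hgam : ∀ n, kindSets CoverKind.gamma (u n \ {Set.univ}) := by
      intro n
      obtain ⟨hc, hinf, hfin⟩ := (hu n).2
      refine ⟨?_, hinf.diff (Set.finite_singleton _), fun x =>
        Set.Finite.subset (hfin x) (fun V hV => ⟨hV.1.1, hV.2⟩)⟩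
      intro x
      have hbad : ({V ∈ u n | x ∉ V} ∪ {Set.univ}).Finite :=
        (hfin x).union (Set.finite_singleton _)
      obtain ⟨V, hV⟩ := (hinf.diff hbad).nonempty
      refine ⟨V, ⟨hV.1, fun hVuniv => hV.2 (Set.mem_union_right _ hVuniv)⟩, ?_⟩
      by_contra hxV
      exact hV.2 (Set.mem_union_left _ ⟨hV.1, hxV⟩)
    exact SU_select (Φ := CoverKind.gamma) (u' := fun n => u n \ ({Set.univ} : Set (Set X)))
      (fun n => Set.diff_subset) (fun n h => h.2 rfl)
      (fun n => show UpperSeqDenseIn (SU (u n \ ({Set.univ} : Set (Set X)))) (USCb X) from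
        SU_upperSeqDense (fun U hU => (hu n).1 U hU.1) (hgam n)) hd
      (fun n U h => (hu n).1 U h)

/-- A fixed bijection `ℕ ≃ ℕ × ℕ`. -/
noncomputable def pairE : ℕ ≃ ℕ × ℕ := (Denumerable.eqv (ℕ × ℕ)).symm

lemma block_select {F : ℕ → Set (X → ℝ)} (hsubH : ∀ n, F n ⊆ USCb X)
    (hcond : ∀ n, ∀ f ∈ F n, (0:X→ℝ) ≤ f ∧ f - 0 ∈ USCb X)
    (hne0 : ∀ n, (0:X→ℝ) ∉ F n)
    (claim : ∀ k : ℕ, ∃ g : ℕ → X → ℝ,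
       (∀ m, g m ∈ F (pairE.symm (k, m))) ∧
       ∀ T : Finset X, ∃ m, ∀ x ∈ T, g m x < 1/((k:ℝ)+1)) :
    ∃ sel : ℕ → X → ℝ, (∀ n, sel n ∈ F n) ∧
      Set.range sel ∈ PhiH CoverKind.omega 0 (USCb X) := by
  choose g hg1 hg2 using claim
  refine ⟨fun n => g (pairE n).1 (pairE n).2, fun n => ?_, ?_, ⟨?_, ?_⟩, ?_⟩
  · have h1 := hg1 (pairE n).1 (pairE n).2
    rwa [Prod.mk.eta, Equiv.symm_apply_apply] at h1
  · rintro _ ⟨n, rfl⟩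
    have h1 := hg1 (pairE n).1 (pairE n).2
    rw [Prod.mk.eta, Equiv.symm_apply_apply] at h1
    exact hsubH n h1
  · rintro ⟨n, hn⟩
    have hn' : g (pairE n).1 (pairE n).2 = 0 := hn
    have h1 := hg1 (pairE n).1 (pairE n).2
    rw [Prod.mk.eta, Equiv.symm_apply_apply] at h1
    rw [hn'] at h1
    exact hne0 n h1
  · rw [closure_pi_iff]
    intro T ε hε
    obtain ⟨k, hk⟩ := exists_nat_one_div_lt hε
    obtain ⟨m, hm⟩ := hg2 k T
    refine ⟨g k m, ⟨pairE.symm (k, m), show g (pairE (pairE.symm (k, m))).1 (pairE (pairE.symm (k, m))).2 = g k m by rw [Equiv.apply_symm_apply]⟩, fun x hx => ?_⟩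
    have hpos : (0:X→ℝ) ≤ g k m := (hcond _ _ (hg1 k m)).1
    rw [Pi.zero_apply, sub_zero, abs_of_nonneg (hpos x)]
    calc g k m x < 1/((k:ℝ)+1) := hm x hx
      _ < ε := by exact_mod_cast hk
  · rintro _ ⟨n, rfl⟩
    have h1 := hg1 (pairE n).1 (pairE n).2
    rw [Prod.mk.eta, Equiv.symm_apply_apply] at h1
    exact hcond n _ h1

lemma small_of_omega {F : Set (X → ℝ)} (h : PropOmega 0 F) (hpos : ∀ f ∈ F, (0:X→ℝ) ≤ f) :
    ∀ (T : Finset X) (ε : ℝ), 0 < ε → ∃ f ∈ F \ {0}, ∀ x ∈ T, f x < ε := by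
  intro T ε hε
  obtain ⟨f, hf, hfc⟩ := closure_pi_iff.1 h.2 T ε hε
  refine ⟨f, ⟨hf, fun h0 => h.1 (h0 ▸ hf)⟩, fun x hx => ?_⟩
  have := hfc x hx
  rw [Pi.zero_apply, sub_zero, abs_of_nonneg (hpos f hf x)] at this
  exact this

lemma small_of_gamma {F : Set (X → ℝ)} (h : PropGamma 0 F) (hpos : ∀ f ∈ F, (0:X→ℝ) ≤ f) :
    ∀ (T : Finset X) (ε : ℝ), 0 < ε → ∃ f ∈ F \ {0}, ∀ x ∈ T, f x < ε := by
  intro T ε hε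
  have hbad : (({0} : Set (X→ℝ)) ∪ ⋃ x ∈ T, {f ∈ F | ε ≤ |f x - 0|}).Finite :=
    (Set.finite_singleton _).union (Set.Finite.biUnion T.finite_toSet fun x _ => h.2 ε hε x)
  obtain ⟨f, hf⟩ := (h.1.diff hbad).nonempty
  refine ⟨f, ⟨hf.1, fun h0 => hf.2 (Set.mem_union_left _ h0)⟩, fun x hx => ?_⟩
  by_contra hc
  push_neg at hc
  refine hf.2 (Set.mem_union_right _ ?_)
  refine Set.mem_biUnion hx ⟨hf.1, ?_⟩
  rw [sub_zero, abs_of_nonneg (hpos f hf.1 x)]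
  exact hc

lemma cover_mem_omega {F : Set (X → ℝ)} (hsubH : F ⊆ USCb X)
    (h : PropOmega 0 F) (hpos : ∀ f ∈ F, (0:X→ℝ) ≤ f) (ε : ℝ) (hε : 0 < ε)
    (hnb : ¬ ∃ f ∈ F \ {0}, ∀ x, f x < ε) :
    ((fun f : X → ℝ => {x | f x < ε}) '' (F \ {0})) ∈ OpenKindCovers X CoverKind.omega := by
  refine ⟨?_, ?_, ?_, ?_⟩
  · rintro V ⟨f, hf, rfl⟩
    exact (hsubH hf.1).1 ε
  · intro x
    obtain ⟨f, hf, hfx⟩ := small_of_omega h hpos {x} ε hε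
    exact ⟨_, ⟨f, hf, rfl⟩, hfx x (by simp)⟩
  · rintro ⟨f, hf, hfe⟩
    refine hnb ⟨f, hf, fun x => ?_⟩
    have : x ∈ Set.univ := Set.mem_univ x
    rw [← hfe] at this
    exact this
  · intro G hG
    obtain ⟨f, hf, hfx⟩ := small_of_omega h hpos hG.toFinset ε hε
    exact ⟨_, ⟨f, hf, rfl⟩, fun x hx => hfx x (hG.mem_toFinset.2 hx)⟩

lemma cover_mem_gamma {F : Set (X → ℝ)} (hsubH : F ⊆ USCb X)
    (h : PropGamma 0 F) (hpos : ∀ f ∈ F, (0:X→ℝ) ≤ f) (ε : ℝ) (hε : 0 < ε)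
    (hnb : ¬ ∃ f ∈ F \ {0}, ∀ x, f x < ε) :
    ((fun f : X → ℝ => {x | f x < ε}) '' (F \ {0})) ∈ OpenKindCovers X CoverKind.gamma := by
  have habs : ∀ f ∈ F, ∀ x : X, ¬ (f x < ε) → ε ≤ |f x - 0| := by
    intro f hf x hx
    rw [sub_zero, abs_of_nonneg (hpos f hf x)]
    exact not_lt.1 hx
  refine ⟨?_, ?_, ?_, ?_⟩
  · rintro V ⟨f, hf, rfl⟩
    exact (hsubH hf.1).1 ε
  · intro x
    obtain ⟨f, hf, hfx⟩ := small_of_gamma h hpos {x} ε hε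
    exact ⟨_, ⟨f, hf, rfl⟩, hfx x (by simp)⟩
  · by_contra hfin
    rw [Set.not_infinite] at hfin
    have hcover : F \ {0} ⊆ ⋃ V ∈ (fun f : X → ℝ => {x | f x < ε}) '' (F \ {0}),
        {f ∈ F \ {0} | {x | f x < ε} = V} := by
      intro f hf
      exact Set.mem_biUnion ⟨f, hf, rfl⟩ ⟨hf, rfl⟩
    by_cases hall : ∀ V ∈ (fun f : X → ℝ => {x | f x < ε}) '' (F \ {0}),
        {f ∈ F \ {0} | {x | f x < ε} = V}.Finite
    · have : (F \ {0}).Finite :=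
        Set.Finite.subset (Set.Finite.biUnion hfin hall) hcover
      exact (h.1.diff (Set.finite_singleton _)) this
    · push_neg at hall
      obtain ⟨V, hV, hVinf'⟩ := hall
      have hVinf : {f | f ∈ F \ {0} ∧ {x | f x < ε} = V}.Infinite := hVinf'
      have hVuniv : V = Set.univ := by
        by_contra hVu
        obtain ⟨x, hxV⟩ : ∃ x, x ∉ V := by
          by_contra hc
          push_neg at hc
          exact hVu (Set.eq_univ_of_forall hc)
        refine hVinf ?_
        refine Set.Finite.subset (h.2 ε hε x) ?_
        rintro f ⟨⟨hfF, _⟩, hfV⟩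
        refine ⟨hfF, habs f hfF x ?_⟩
        intro hlt
        exact hxV (hfV ▸ hlt)
      obtain ⟨f, hf⟩ := hVinf.nonempty
      refine hnb ⟨f, hf.1, fun x => ?_⟩
      have : x ∈ V := hVuniv ▸ Set.mem_univ x
      rw [← hf.2] at this
      exact this
  · intro x
    refine Set.Finite.subset ((h.2 ε hε x).image (fun f : X → ℝ => {x | f x < ε})) ?_
    rintro V ⟨⟨f, hf, rfl⟩, hxV⟩
    exact Set.mem_image_of_mem _ ⟨hf.1, habs f hf.1 x hxV⟩

lemma bImpC {Φ : CoverKind}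
    (hΦ : Φ = CoverKind.omega ∨ Φ = CoverKind.gamma)
    (hsep : SeparableSet (USCb X))
    (hb : S1 (OpenKindCovers X Φ) (OpenKindCovers X CoverKind.omega)) :
    SeparableSet (USCb X) ∧
      S1 (PhiH Φ 0 (USCb X)) (PhiH CoverKind.omega 0 (USCb X)) := by
  refine ⟨hsep, ?_⟩
  intro F hF
  classical
  have hpos : ∀ n, ∀ f ∈ F n, (0:X→ℝ) ≤ f := fun n f hf => ((hF n).2.2 f hf).1
  have hsmall : ∀ n (T : Finset X) (ε : ℝ), 0 < ε →
      ∃ f ∈ F n \ {0}, ∀ x ∈ T, f x < ε := by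
    rcases hΦ with rfl | rfl
    · exact fun n => small_of_omega (hF n).2.1 (hpos n)
    · exact fun n => small_of_gamma (hF n).2.1 (hpos n)
  have hcovmem : ∀ (n : ℕ) (ε : ℝ), 0 < ε → (¬ ∃ f ∈ F n \ {0}, ∀ x, f x < ε) →
      ((fun f : X → ℝ => {x | f x < ε}) '' (F n \ {0})) ∈ OpenKindCovers X Φ := by
    rcases hΦ with rfl | rfl
    · exact fun n ε hε hnb => cover_mem_omega (hF n).1 (hF n).2.1 (hpos n) ε hε hnb
    · exact fun n ε hε hnb => cover_mem_gamma (hF n).1 (hF n).2.1 (hpos n) ε hε hnb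
  have claim : ∀ k : ℕ, ∃ g : ℕ → X → ℝ,
      (∀ m, g m ∈ F (pairE.symm (k, m)) \ {0}) ∧
      ∀ T : Finset X, ∃ m, ∀ x ∈ T, g m x < 1/((k:ℝ)+1) := by
    intro k
    set εk : ℝ := 1/((k:ℝ)+1) with hεkdef
    have hεk : 0 < εk := by positivity
    by_cases hbad : ∃ m, ∃ f ∈ F (pairE.symm (k, m)) \ {0}, ∀ x, f x < εk
    · obtain ⟨m₀, f₀, hf₀, hf₀s⟩ := hbad
      have hne : ∀ m, (F (pairE.symm (k, m)) \ {0}).Nonempty := by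
        intro m
        obtain ⟨f, hf, _⟩ := hsmall (pairE.symm (k, m)) ∅ 1 one_pos
        exact ⟨f, hf⟩
      choose z hz using hne
      refine ⟨fun m => if m = m₀ then f₀ else z m, fun m => ?_, fun T => ⟨m₀, fun x hx => ?_⟩⟩
      · by_cases hm : m = m₀
        · subst hm; simpa using hf₀
        · simpa [hm] using hz m
      · simpa using hf₀s x
    · have hnb : ∀ m, ¬ ∃ f ∈ F (pairE.symm (k, m)) \ {0}, ∀ x, f x < εk :=
        fun m hm => hbad ⟨m, hm⟩
      obtain ⟨W, hW, hWΩ⟩ := hb (fun m =>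
        (fun f : X → ℝ => {x | f x < εk}) '' (F (pairE.symm (k, m)) \ {0}))
        (fun m => hcovmem _ _ hεk (hnb m))
      choose f hfF hfW using hW
      refine ⟨f, hfF, fun T => ?_⟩
      obtain ⟨V, hVr, hTV⟩ := hWΩ.2.2.2 ↑T T.finite_toSet
      obtain ⟨m, rfl⟩ := hVr
      refine ⟨m, fun x hx => ?_⟩
      have := hTV (show (x:X) ∈ (↑T : Set X) from hx)
      rw [← hfW m] at this
      exact this
  obtain ⟨sel, hsel1, hsel2⟩ := block_select (F := fun n => F n \ {0})
    (fun n => Set.Subset.trans Set.diff_subset (hF n).1)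
    (fun n f hf => (hF n).2.2 f hf.1)
    (fun n hn => hn.2 rfl)
    claim
  exact ⟨sel, fun n => (hsel1 n).1, hsel2⟩

lemma cImpA {Φ : CoverKind}
    (hΦ : Φ = CoverKind.omega ∨ Φ = CoverKind.gamma)
    (hsep : SeparableSet (USCb X))
    (hc : S1 (PhiH Φ 0 (USCb X)) (PhiH CoverKind.omega 0 (USCb X))) :
    S1 (upTilde Φ (USCb X)) (Dfam (USCb X)) := by
  classical
  intro S hS
  obtain ⟨D, hDc, hDsub, hDdense⟩ := hsep
  have hD0 : D.Nonempty := by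
    by_contra h
    rw [Set.not_nonempty_iff_eq_empty] at h
    have h2 := hDdense zero_mem_USCb
    rw [h, closure_empty] at h2
    exact h2
  obtain ⟨d, hd⟩ := hDc.exists_eq_range hD0
  have hdH : ∀ k, d k ∈ USCb X := fun k => hDsub (hd ▸ ⟨k, rfl⟩)
  have hSsub : ∀ n, S n ⊆ USCb X := fun n => upTilde_subset (hS n)
  have claim : ∀ k, ∃ g : ℕ → X → ℝ, (∀ m, g m ∈ S (pairE.symm (k, m))) ∧
      ∀ (T : Finset X) (ε : ℝ), 0 < ε → ∃ m, ∀ x ∈ T, |g m x - d k x| < ε := by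
    intro k
    rcases hΦ with rfl | rfl
    · -- Ω case : upper density
      set G : ℕ → Set (X → ℝ) :=
        fun m => {e | e ∈ S (pairE.symm (k, m)) ∧ d k ≤ e ∧ e - d k ∈ USCb X} with hGdef
      have hGcl : ∀ m, d k ∈ closure (G m) :=
        fun m => (hS (pairE.symm (k, m))).2 (d k) (hdH k) ⟨hdH k, le_rfl⟩
      by_cases hdeg : ∃ m, d k ∈ G m
      · obtain ⟨m₀, hm₀⟩ := hdeg
        have hGne : ∀ m, (G m).Nonempty := fun m => by
          obtain ⟨e, he, _⟩ := closure_pi_iff.1 (hGcl m) ∅ 1 one_pos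
          exact ⟨e, he⟩
        choose z hz using hGne
        refine ⟨fun m => if m = m₀ then d k else z m, fun m => ?_,
          fun T ε hε => ⟨m₀, fun x hx => ?_⟩⟩
        · by_cases hm : m = m₀
          · subst hm; simpa using hm₀.1
          · simpa [hm] using (hz m).1
        · simpa using hε
      · push_neg at hdeg
        set Fm : ℕ → Set (X → ℝ) := fun m => (fun e => e - d k) '' (G m) with hFmdef
        have hFm : ∀ m, Fm m ∈ PhiH CoverKind.omega 0 (USCb X) := by
          intro m
          refine ⟨?_, ⟨?_, ?_⟩, ?_⟩
          · rintro _ ⟨e, he, rfl⟩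
            exact he.2.2
          · rintro ⟨e, he, he0⟩
            exact hdeg m (sub_eq_zero.1 he0 ▸ he)
          · rw [closure_pi_iff]
            intro T ε hε
            obtain ⟨e, he, hec⟩ := closure_pi_iff.1 (hGcl m) T ε hε
            refine ⟨e - d k, ⟨e, he, rfl⟩, fun x hx => ?_⟩
            simpa using hec x hx
          · rintro _ ⟨e, he, rfl⟩
            exact ⟨fun x => sub_nonneg.2 (he.2.1 x), by simpa using he.2.2⟩
        obtain ⟨v, hv, hvΩ⟩ := hc Fm hFm
        have hv0 : (0:X→ℝ) ∈ closure (Set.range v) := hvΩ.2.1.2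
        have hsel : ∀ m, ∃ e ∈ G m, v m = e - d k := by
          intro m
          obtain ⟨e, he, heq⟩ := hv m
          exact ⟨e, he, heq.symm⟩
        choose e he heq using hsel
        refine ⟨e, fun m => (he m).1, fun T ε hε => ?_⟩
        obtain ⟨w, ⟨m, rfl⟩, hwc⟩ := closure_pi_iff.1 hv0 T ε hε
        refine ⟨m, fun x hx => ?_⟩
        have h3 := hwc x hx
        rw [heq m] at h3
        simpa using h3
    · -- Γ case : upper sequential density
      have hseq : ∀ m, ∃ u : ℕ → X → ℝ,
          (∀ j, u j ∈ S (pairE.symm (k, m)) ∧ d k ≤ u j ∧ u j - d k ∈ USCb X) ∧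
          Filter.Tendsto u Filter.atTop (nhds (d k)) :=
        fun m => (hS (pairE.symm (k, m))).2 (d k) (hdH k)
      choose u hu1 hu2 using hseq
      set Fm : ℕ → Set (X → ℝ) := fun m => Set.range (fun j => u m j - d k) with hFmdef
      by_cases hdeg : ∃ m, (Fm m).Finite
      · obtain ⟨m₀, hfin⟩ := hdeg
        have hex : ∃ w, {j | u m₀ j - d k = w}.Infinite := by
          by_contra hcon
          push_neg at hcon
          have h1 : (Set.univ : Set ℕ) ⊆ ⋃ w ∈ Fm m₀, {j | u m₀ j - d k = w} :=
            fun j _ => Set.mem_biUnion ⟨j, rfl⟩ rfl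
          exact Set.infinite_univ (Set.Finite.subset (Set.Finite.biUnion hfin
            (fun w _ => hcon w)) h1)
        obtain ⟨w, hJinf⟩ := hex
        have hw0 : w = 0 := by
          funext x
          show w x = 0
          have htt : Filter.Tendsto (fun i => u m₀ i x) Filter.atTop (nhds (d k x)) :=
            tendsto_pi_nhds.1 (hu2 m₀) x
          by_contra hne
          have hpos : 0 < |w x| := abs_pos.2 hne
          obtain ⟨N, hN⟩ := Metric.tendsto_atTop.1 htt (|w x|) hpos
          obtain ⟨i, hiJ, hiN⟩ := hJinf.exists_gt N
          have hval : u m₀ i x - d k x = w x := by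
            have := congrFun (show u m₀ i - d k = w from hiJ) x
            simpa using this
          have h5 := hN i (le_of_lt hiN)
          rw [Real.dist_eq, hval] at h5
          exact lt_irrefl _ h5
        have hdS : d k ∈ S (pairE.symm (k, m₀)) := by
          obtain ⟨i, hi⟩ := hJinf.nonempty
          have : u m₀ i = d k := by
            have h6 : u m₀ i - d k = 0 := by rw [hi, hw0]
            have := sub_eq_zero.1 h6
            exact this
          exact this ▸ (hu1 m₀ i).1
        refine ⟨fun m => if m = m₀ then d k else u m 0, fun m => ?_,
          fun T ε hε => ⟨m₀, fun x hx => ?_⟩⟩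
        · by_cases hm : m = m₀
          · subst hm; simpa using hdS
          · simpa [hm] using (hu1 m 0).1
        · simpa using hε
      · push_neg at hdeg
        have hFm : ∀ m, Fm m ∈ PhiH CoverKind.gamma 0 (USCb X) := by
          intro m
          refine ⟨?_, ⟨?_, ?_⟩, ?_⟩
          · rintro _ ⟨j, rfl⟩
            exact (hu1 m j).2.2
          · exact hdeg m
          · intro ε hε x
            have htt : Filter.Tendsto (fun i => u m i x) Filter.atTop (nhds (d k x)) :=
              tendsto_pi_nhds.1 (hu2 m) x
            obtain ⟨N, hN⟩ := Metric.tendsto_atTop.1 htt ε hε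
            refine Set.Finite.subset ((Set.finite_Iio N).image (fun j => u m j - d k)) ?_
            rintro _ ⟨⟨j, rfl⟩, hfx⟩
            refine Set.mem_image_of_mem _ ?_
            by_contra hj
            have hj' : N ≤ j := le_of_not_gt (by simpa using hj)
            have h7 := hN j hj'
            rw [Real.dist_eq] at h7
            have h8 : ε ≤ |u m j x - d k x| := by simpa using hfx
            linarith
          · rintro _ ⟨j, rfl⟩
            exact ⟨fun x => sub_nonneg.2 ((hu1 m j).2.1 x), by simpa using (hu1 m j).2.2⟩
        obtain ⟨v, hv, hvΩ⟩ := hc Fm hFm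
        have hv0 : (0:X→ℝ) ∈ closure (Set.range v) := hvΩ.2.1.2
        have hsel : ∀ m, ∃ j, v m = u m j - d k := by
          intro m
          obtain ⟨j, hj⟩ := hv m
          exact ⟨j, hj.symm⟩
        choose jj hjj using hsel
        refine ⟨fun m => u m (jj m), fun m => (hu1 m (jj m)).1, fun T ε hε => ?_⟩
        obtain ⟨w, ⟨m, rfl⟩, hwc⟩ := closure_pi_iff.1 hv0 T ε hε
        refine ⟨m, fun x hx => ?_⟩
        have h9 := hwc x hx
        rw [hjj m] at h9
        simpa using h9
  choose g hg1 hg2 using claim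
  refine ⟨fun n => g (pairE n).1 (pairE n).2, fun n => ?_, ?_, ?_⟩
  · have h1 := hg1 (pairE n).1 (pairE n).2
    rwa [Prod.mk.eta, Equiv.symm_apply_apply] at h1
  · rintro _ ⟨n, rfl⟩
    have h1 := hg1 (pairE n).1 (pairE n).2
    rw [Prod.mk.eta, Equiv.symm_apply_apply] at h1
    exact hSsub n h1
  · intro f hf
    have h1 : f ∈ closure D := hDdense hf
    have h2 : D ⊆ closure (Set.range (fun n => g (pairE n).1 (pairE n).2)) := by
      intro y hy
      rw [hd] at hy
      obtain ⟨k, rfl⟩ := hy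
      rw [closure_pi_iff]
      intro T ε hε
      obtain ⟨m, hm⟩ := hg2 k T ε hε
      refine ⟨g k m, ⟨pairE.symm (k, m),
        show g (pairE (pairE.symm (k, m))).1 (pairE (pairE.symm (k, m))).2 = g k m by
          rw [Equiv.apply_symm_apply]⟩, hm⟩
    exact closure_minimal h2 isClosed_closure h1

end Impl

/-- For Φ ∈ {Ω, Γ}, X infinite Hausdorff with C*_p(X) countably dense
in USC*_p(X), TFAE:
(a) USC*_p(X) satisfies S₁(Φ̃↑, 𝒟);
(b) USC*_p(X) is separable and X is an S₁(Φ,Ω)-space;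
(c) USC*_p(X) is separable and satisfies S₁(Φ_0̄,Ω_0̄);
(d) USC*_p(X) is separable and satisfies S₁(Φ̃↑,Ω_0̄). -/
theorem statement8 {X : Type*} [TopologicalSpace X] [T2Space X] [Infinite X]
    (Φ : CoverKind) (hΦ : Φ = CoverKind.omega ∨ Φ = CoverKind.gamma)
    (hcd : ∀ f ∈ USCb X, ∃ G : Set (X → ℝ), G ⊆ Cb X ∧ G.Countable ∧ f ∈ closure G) :
    List.TFAE [
      S1 (upTilde Φ (USCb X)) (Dfam (USCb X)),
      SeparableSet (USCb X) ∧
        S1 (OpenKindCovers X Φ) (OpenKindCovers X CoverKind.omega),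
      SeparableSet (USCb X) ∧
        S1 (PhiH Φ (0 : X → ℝ) (USCb X)) (PhiH CoverKind.omega (0 : X → ℝ) (USCb X)),
      SeparableSet (USCb X) ∧
        S1 (upTilde Φ (USCb X)) {F | PropOmega (0 : X → ℝ) F}] := by
  tfae_have 1 → 4 := fun h => aImpD hΦ h
  tfae_have 4 → 2 := fun h => dImpB hΦ h.1 h.2
  tfae_have 2 → 3 := fun h => bImpC hΦ h.1 h.2
  tfae_have 3 → 1 := fun h => cImpA hΦ h.1 h.2
  tfae_finish

end Selectors
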